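/- Let β > 1/2, ε < (2β−3)/4, a = β − 2ε, μ the generalized Cauchy distribution with density Z^{-1}(1+x²)^{-β}, and f(x) = x(1+x²)^ε. Then the Rayleigh quotient (∫ (1+x²) f'² dμ) / Var_μ(f) equals 2(β−1) + 6ε²/(β−2ε). -/

import Mathlib

open Real MeasureTheory Set Filter Topology
open scoped ENNReal NNReal

private lemma crq_cont (r : ℝ) : Continuous fun x : ℝ => (1 + x ^ 2) ^ r := by
  apply Continuous.rpow_const (by continuity)
  intro x; left; positivity

private lemma crq_integrable {p : ℝ} (hp : 1/2 < p) :
    Integrable (fun x : ℝ => (1 + x ^ 2) ^ (-p)) := by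
  have h := integrable_rpow_neg_one_add_norm_sq (E := ℝ) (μ := volume) (r := 2*p)
    (by simp; linarith)
  simp only [Real.norm_eq_abs, sq_abs, show -(2*p)/2 = -p by ring] at h
  exact h

private lemma crq_tendsto_top {p : ℝ} (hp : 1/2 < p) :
    Tendsto (fun x : ℝ => x * (1 + x ^ 2) ^ (-p)) atTop (𝓝 0) := by
  have hlim : Tendsto (fun x : ℝ => x ^ (1 - 2*p)) atTop (𝓝 0) := by
    rw [show (1 - 2*p) = -(2*p - 1) by ring]
    exact tendsto_rpow_neg_atTop (by linarith)
  apply squeeze_zero_norm' _ hlim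
  filter_upwards [eventually_ge_atTop 1] with x hx
  have hx0 : (0:ℝ) < x := by linarith
  have hy : (0:ℝ) < 1 + x ^ 2 := by positivity
  have h2 : (1 + x ^ 2) ^ (-p) ≤ (x ^ 2) ^ (-p) :=
    rpow_le_rpow_of_nonpos (by positivity) (by linarith) (by linarith)
  have h3 : (x ^ 2 : ℝ) ^ (-p) = x ^ (2 * (-p)) := by
    rw [← Real.rpow_natCast x 2, ← Real.rpow_mul hx0.le]; norm_num
  have h4 : x * x ^ (2 * (-p)) = x ^ (1 - 2*p) := by
    rw [show (1 - 2*p) = 2 * (-p) + 1 by ring, Real.rpow_add_one hx0.ne']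
    ring
  rw [Real.norm_eq_abs, abs_of_nonneg (by positivity)]
  calc x * (1 + x ^ 2) ^ (-p) ≤ x * (x ^ 2) ^ (-p) :=
        mul_le_mul_of_nonneg_left h2 hx0.le
    _ = x ^ (1 - 2*p) := by rw [h3, h4]

private lemma crq_tendsto_bot {p : ℝ} (hp : 1/2 < p) :
    Tendsto (fun x : ℝ => x * (1 + x ^ 2) ^ (-p)) atBot (𝓝 0) := by
  have h := (crq_tendsto_top hp).comp tendsto_neg_atBot_atTop
  have h' : Tendsto (fun x : ℝ => -x * (1 + x ^ 2) ^ (-p)) atBot (𝓝 0) := by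
    convert h using 2 with x
    simp [neg_sq]
  simpa [neg_mul, neg_neg] using h'.neg

private lemma crq_pos {p : ℝ} (hp : 1/2 < p) : 0 < ∫ x : ℝ, (1 + x ^ 2) ^ (-p) := by
  have hsupp : Function.support (fun x : ℝ => (1 + x ^ 2) ^ (-p)) = Set.univ := by
    ext x
    simp only [Function.mem_support, Set.mem_univ, iff_true]
    positivity
  rw [integral_pos_iff_support_of_nonneg (fun x => by positivity) (crq_integrable hp), hsupp]
  simp [Real.volume_univ]

private lemma crq_rec {p : ℝ} (hp : 1/2 < p) :
    ∫ x : ℝ, (1 + x ^ 2) ^ (-(p+1)) = (2*p-1)/(2*p) * ∫ x : ℝ, (1 + x ^ 2) ^ (-p) := by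
  have hint_p := crq_integrable hp
  have hint_p1 := crq_integrable (show 1/2 < p + 1 by linarith)
  have hd : ∀ x : ℝ, HasDerivAt (fun x : ℝ => x * (1 + x ^ 2) ^ (-p))
      ((1 - 2*p) * (1 + x ^ 2) ^ (-p) + (2*p) * (1 + x ^ 2) ^ (-(p+1))) x := by
    intro x
    have hy : (0:ℝ) < 1 + x ^ 2 := by positivity
    have h1 : HasDerivAt (fun x : ℝ => 1 + x ^ 2) (2 * x) x := by
      simpa using (hasDerivAt_pow 2 x).const_add 1
    have h2 := h1.rpow_const (p := -p) (Or.inl hy.ne')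
    have h3 := (hasDerivAt_id x).mul h2
    refine h3.congr_deriv ?_
    have e1 : (1 + x ^ 2 : ℝ) ^ (-p) = (1 + x ^ 2) ^ (-p-1) * (1 + x ^ 2) := by
      rw [← Real.rpow_add_one hy.ne']
      congr 1
      ring
    have e2 : (1 + x ^ 2 : ℝ) ^ (-(p+1)) = (1 + x ^ 2) ^ (-p-1) := by
      rw [show (-(p+1) : ℝ) = -p-1 by ring]
    rw [e2, e1]
    simp only [id_eq]
    ring
  have hgint : Integrable (fun x : ℝ =>
      (1 - 2*p) * (1 + x ^ 2) ^ (-p) + (2*p) * (1 + x ^ 2) ^ (-(p+1))) :=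
    (hint_p.const_mul _).add (hint_p1.const_mul _)
  have hIoi := integral_Ioi_of_hasDerivAt_of_tendsto' (a := 0)
    (fun x _ => hd x) hgint.integrableOn (crq_tendsto_top hp)
  have hIic := integral_Iic_of_hasDerivAt_of_tendsto' (a := 0)
    (fun x _ => hd x) hgint.integrableOn (crq_tendsto_bot hp)
  have htot : ∫ x : ℝ, ((1 - 2*p) * (1 + x ^ 2) ^ (-p) + (2*p) * (1 + x ^ 2) ^ (-(p+1))) = 0 := by
    rw [← intervalIntegral.integral_Iic_add_Ioi hgint.integrableOn hgint.integrableOn, hIoi, hIic]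
    norm_num
  rw [integral_add (hint_p.const_mul _) (hint_p1.const_mul _), integral_const_mul,
    integral_const_mul] at htot
  have h2p : (2*p : ℝ) ≠ 0 := by positivity
  rw [div_mul_eq_mul_div, eq_div_iff h2p]
  linear_combination htot

private lemma crq_density (Z β : ℝ) (hZ : 0 ≤ Z⁻¹) (g : ℝ → ℝ) :
    ∫ x, g x ∂(MeasureTheory.volume.withDensity fun x =>
        ENNReal.ofReal (Z⁻¹ * (1 + x ^ 2) ^ (-β)))
      = ∫ x : ℝ, Z⁻¹ * (1 + x ^ 2) ^ (-β) * g x := by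
  have hmeas : Measurable fun x : ℝ => (Z⁻¹ * (1 + x ^ 2) ^ (-β)).toNNReal :=
    (continuous_const.mul (crq_cont (-β))).measurable.real_toNNReal
  rw [show (fun x : ℝ => ENNReal.ofReal (Z⁻¹ * (1 + x ^ 2) ^ (-β)))
      = fun x : ℝ => ((Z⁻¹ * (1 + x ^ 2) ^ (-β)).toNNReal : ℝ≥0∞) from rfl,
    integral_withDensity_eq_integral_smul hmeas]
  congr 1
  funext x
  rw [NNReal.smul_def, Real.coe_toNNReal _ (by positivity)]
  rw [smul_eq_mul]

/-- For the generalized Cauchy distribution of parameter `β > 1/2` and test function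
`f(x) = x(1+x²)^ε` with `ε < (2β-3)/4`, the Rayleigh quotient of the weighted energy and
the variance equals `2(β-1) + 6ε²/(β-2ε)`. -/
theorem cauchy_rayleigh_quotient (β ε : ℝ) (hβ : 1/2 < β) (hε : ε < (2*β - 3)/4)
    (Z : ℝ) (hZ : Z = ∫ x : ℝ, (1 + x ^ 2) ^ (-β))
    (μ : Measure ℝ)
    (hμ : μ = MeasureTheory.volume.withDensity fun x =>
      ENNReal.ofReal (Z⁻¹ * (1 + x ^ 2) ^ (-β)))
    (f : ℝ → ℝ) (hf : f = fun x => x * (1 + x ^ 2) ^ ε) :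
    (∫ x, (1 + x ^ 2) * (deriv f x) ^ 2 ∂μ) /
      (∫ x, f x ^ 2 ∂μ - (∫ x, f x ∂μ) ^ 2)
    = 2 * (β - 1) + 6 * ε ^ 2 / (β - 2 * ε) := by
  obtain ⟨a, ha_def⟩ : ∃ a : ℝ, a = β - 2*ε := ⟨_, rfl⟩
  have ha : 3/2 < a := by rw [ha_def]; linarith
  have hZpos : 0 < Z := by rw [hZ]; exact crq_pos hβ
  have hZinv : 0 < Z⁻¹ := by positivity
  -- derivative of f
  have hderiv_eq : ∀ x : ℝ, deriv f x = (1 + x ^ 2) ^ (ε-1) * (1 + (1+2*ε) * x ^ 2) := by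
    intro x
    have hy : (0:ℝ) < 1 + x ^ 2 := by positivity
    have h1 : HasDerivAt (fun x : ℝ => 1 + x ^ 2) (2 * x) x := by
      simpa using (hasDerivAt_pow 2 x).const_add 1
    have h2 := h1.rpow_const (p := ε) (Or.inl hy.ne')
    have h3 := (hasDerivAt_id x).mul h2
    have h4 : HasDerivAt f ((1 + x ^ 2) ^ (ε-1) * (1 + (1+2*ε) * x ^ 2)) x := by
      rw [hf]
      refine h3.congr_deriv ?_
      have he : (1 + x ^ 2 : ℝ) ^ ε = (1 + x ^ 2) ^ (ε-1) * (1 + x ^ 2) := by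
        rw [← Real.rpow_add_one hy.ne']
        congr 1
        ring
      rw [he]
      simp only [id_eq]
      ring
    exact h4.deriv
  simp only [hderiv_eq]
  simp only [hμ, hf]
  simp only [crq_density Z β hZinv.le]
  -- mean is zero
  have hmean : ∫ x : ℝ, Z⁻¹ * (1 + x ^ 2) ^ (-β) * (x * (1 + x ^ 2) ^ ε) = 0 := by
    have hodd := integral_neg_eq_self
      (fun x : ℝ => Z⁻¹ * (1 + x ^ 2) ^ (-β) * (x * (1 + x ^ 2) ^ ε)) volume
    simp only [neg_sq, neg_mul, mul_neg, integral_neg] at hodd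
    linarith
  -- second moment
  have hsq : ∫ x : ℝ, Z⁻¹ * (1 + x ^ 2) ^ (-β) * (x * (1 + x ^ 2) ^ ε) ^ 2
      = Z⁻¹ * ((∫ x : ℝ, (1 + x ^ 2) ^ (-(a-1))) - ∫ x : ℝ, (1 + x ^ 2) ^ (-a)) := by
    have hpt : ∀ x : ℝ, Z⁻¹ * (1 + x ^ 2) ^ (-β) * (x * (1 + x ^ 2) ^ ε) ^ 2
        = Z⁻¹ * ((1 + x ^ 2) ^ (-(a-1)) - (1 + x ^ 2) ^ (-a)) := by
      intro x
      have hy : (0:ℝ) < 1 + x ^ 2 := by positivity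
      have hsqe : (1 + x ^ 2 : ℝ) ^ ε * (1 + x ^ 2) ^ ε * (1 + x ^ 2) ^ (-β)
          = (1 + x ^ 2) ^ (-a) := by
        rw [← Real.rpow_add hy, ← Real.rpow_add hy]
        congr 1
        rw [ha_def]; ring
      have hv : (1 + x ^ 2 : ℝ) ^ (-(a-1)) = (1 + x ^ 2) ^ (-a) * (1 + x ^ 2) := by
        rw [← Real.rpow_add_one hy.ne']
        congr 1
        ring
      linear_combination (Z⁻¹ * x^2) * hsqe - Z⁻¹ * hv
    rw [integral_congr_ae (Eventually.of_forall hpt), integral_const_mul,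
      integral_sub (crq_integrable (by linarith)) (crq_integrable (by linarith))]
  -- energy
  have hen : ∫ x : ℝ, Z⁻¹ * (1 + x ^ 2) ^ (-β) *
        ((1 + x ^ 2) * ((1 + x ^ 2) ^ (ε-1) * (1 + (1+2*ε) * x ^ 2)) ^ 2)
      = Z⁻¹ * ((1+2*ε)^2 * (∫ x : ℝ, (1 + x ^ 2) ^ (-(a-1)))
          - (4*ε*(1+2*ε)) * (∫ x : ℝ, (1 + x ^ 2) ^ (-a))
          + (4*ε^2) * ∫ x : ℝ, (1 + x ^ 2) ^ (-(a+1))) := by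
    have hpt : ∀ x : ℝ, Z⁻¹ * (1 + x ^ 2) ^ (-β) *
          ((1 + x ^ 2) * ((1 + x ^ 2) ^ (ε-1) * (1 + (1+2*ε) * x ^ 2)) ^ 2)
        = Z⁻¹ * ((1+2*ε)^2 * (1 + x ^ 2) ^ (-(a-1))
            - (4*ε*(1+2*ε)) * (1 + x ^ 2) ^ (-a)
            + (4*ε^2) * (1 + x ^ 2) ^ (-(a+1))) := by
      intro x
      have hy : (0:ℝ) < 1 + x ^ 2 := by positivity
      have hs : (1 + x ^ 2 : ℝ) ^ (ε-1) * (1 + x ^ 2) ^ (ε-1) * (1 + x ^ 2) ^ (-β)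
          = (1 + x ^ 2) ^ (-(a+2)) := by
        rw [← Real.rpow_add hy, ← Real.rpow_add hy]
        congr 1
        rw [ha_def]; ring
      have h1 : (1 + x ^ 2 : ℝ) ^ (-(a-1))
          = (1 + x ^ 2) ^ (-(a+2)) * (1 + x ^ 2) * (1 + x ^ 2) * (1 + x ^ 2) := by
        rw [← Real.rpow_add_one hy.ne', ← Real.rpow_add_one hy.ne',
          ← Real.rpow_add_one hy.ne']
        congr 1; ring
      have h2 : (1 + x ^ 2 : ℝ) ^ (-a)
          = (1 + x ^ 2) ^ (-(a+2)) * (1 + x ^ 2) * (1 + x ^ 2) := by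
        rw [← Real.rpow_add_one hy.ne', ← Real.rpow_add_one hy.ne']
        congr 1; ring
      have h3 : (1 + x ^ 2 : ℝ) ^ (-(a+1)) = (1 + x ^ 2) ^ (-(a+2)) * (1 + x ^ 2) := by
        rw [← Real.rpow_add_one hy.ne']
        congr 1; ring
      rw [h1, h2, h3]
      linear_combination (Z⁻¹ * (1 + x^2) * (1 + (1+2*ε) * x^2)^2) * hs
    rw [integral_congr_ae (Eventually.of_forall hpt), integral_const_mul]
    congr 1
    have hA : Integrable (fun x : ℝ => (1+2*ε)^2 * (1 + x ^ 2) ^ (-(a-1))) :=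
      (crq_integrable (by linarith)).const_mul _
    have hB : Integrable (fun x : ℝ => 4*ε*(1+2*ε) * (1 + x ^ 2) ^ (-a)) :=
      (crq_integrable (by linarith)).const_mul _
    have hC : Integrable (fun x : ℝ => 4*ε^2 * (1 + x ^ 2) ^ (-(a+1))) :=
      (crq_integrable (by linarith)).const_mul _
    have hAB : Integrable (fun x : ℝ => (1+2*ε)^2 * (1 + x ^ 2) ^ (-(a-1))
        - 4*ε*(1+2*ε) * (1 + x ^ 2) ^ (-a)) := hA.sub hB
    rw [integral_add hAB hC, integral_sub hA hB,
      integral_const_mul, integral_const_mul, integral_const_mul]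
  rw [hen, hsq, hmean]
  -- recurrences
  have hrec3 : ∫ x : ℝ, (1 + x ^ 2) ^ (-(a+1))
      = (2*a-1)/(2*a) * ∫ x : ℝ, (1 + x ^ 2) ^ (-a) := crq_rec (by linarith)
  have hrec2 : ∫ x : ℝ, (1 + x ^ 2) ^ (-a)
      = (2*(a-1)-1)/(2*(a-1)) * ∫ x : ℝ, (1 + x ^ 2) ^ (-(a-1)) := by
    have h := crq_rec (p := a-1) (by linarith)
    simp only [show a - 1 + 1 = a by ring] at h
    exact h
  have hI1pos : 0 < ∫ x : ℝ, (1 + x ^ 2) ^ (-(a-1)) := crq_pos (by linarith)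
  rw [hrec3, hrec2]
  rw [show β - 2 * ε = a from ha_def.symm, show β = a + 2*ε from by rw [ha_def]; ring]
  have h2a1 : (2*(a-1) : ℝ) ≠ 0 := by intro h; nlinarith
  have h2a : (2*a : ℝ) ≠ 0 := by positivity
  have ha0 : (a : ℝ) ≠ 0 := by positivity
  have ha1 : a - 1 ≠ 0 := by intro h; linarith
  rw [div_eq_iff]
  · field_simp
    ring
  · have hq : (2*(a-1)-1)/(2*(a-1)) < 1 := by
      rw [div_lt_one (by linarith)]; linarith
    have h1 : 0 < (∫ x : ℝ, (1 + x ^ 2) ^ (-(a-1)))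
        - (2*(a-1)-1)/(2*(a-1)) * ∫ x : ℝ, (1 + x ^ 2) ^ (-(a-1)) := by
      nlinarith
    have h2 := mul_pos hZinv h1
    intro hD
    rw [sub_eq_zero] at hD
    simp only [ne_eq, OfNat.ofNat_ne_zero, not_false_eq_true, zero_pow] at hD
    nlinarith
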